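/- Let H be a Hilbert space, G a positive self-adjoint operator, and A a linear operator with D(G¹ᐟ²) ⊆ D(A). Suppose N(E) := sup{‖Aφ‖ : φ ∈ D(G¹ᐟ²), ‖φ‖ ≤ 1, ‖G¹ᐟ²φ‖² ≤ E} is finite for some E₀ > 0 and N² is concave and nondecreasing on (0,∞). Then N(E) is finite for every E > 0, and moreover A is G¹ᐟ²-bounded: there exist a, b ≥ 0 with ‖Aφ‖² ≤ a²‖φ‖² + b²‖G¹ᐟ²φ‖² for all φ ∈ D(G¹ᐟ²). -/

import Mathlib

open scoped ComplexOrder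

/-- one direction of Proposition 1A: if the (pure-state) operator E-norm
`N(E) = sup {‖Aφ‖ : φ ∈ D(√G), ‖φ‖ ≤ 1, ‖√G φ‖² ≤ E}` is finite for some `E₀ > 0`
and `N²` is concave and nondecreasing on `(0,∞)`, then `N(E)` is finite for every
`E > 0` and `A` is `√G`-bounded. -/
theorem stmt16 {H : Type*} [NormedAddCommGroup H] [InnerProductSpace ℂ H] [CompleteSpace H]
    (S : Submodule ℂ H) (hdense : Dense (S : Set H))
    (sqrtG : S →ₗ[ℂ] H)
    (hsym : ∀ x y : S, (inner ℂ (sqrtG x) (y : H) : ℂ) = inner ℂ (x : H) (sqrtG y))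
    (hpos : ∀ x : S, 0 ≤ (inner ℂ (x : H) (sqrtG x) : ℂ))
    (A : S →ₗ[ℂ] H)
    (N : ℝ → ℝ)
    (hNdef : ∀ E : ℝ, N E =
      sSup {r : ℝ | ∃ φ : S, ‖(φ : H)‖ ≤ 1 ∧ ‖sqrtG φ‖ ^ 2 ≤ E ∧ r = ‖A φ‖})
    (E₀ : ℝ) (hE₀ : 0 < E₀)
    (hfin : BddAbove {r : ℝ | ∃ φ : S, ‖(φ : H)‖ ≤ 1 ∧ ‖sqrtG φ‖ ^ 2 ≤ E₀ ∧ r = ‖A φ‖})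
    (hconc : ConcaveOn ℝ (Set.Ioi 0) (fun E => (N E) ^ 2))
    (hmono : ∀ E₁ E₂, 0 < E₁ → E₁ ≤ E₂ → N E₁ ≤ N E₂) :
    (∀ E : ℝ, 0 < E →
      BddAbove {r : ℝ | ∃ φ : S, ‖(φ : H)‖ ≤ 1 ∧ ‖sqrtG φ‖ ^ 2 ≤ E ∧ r = ‖A φ‖}) ∧
    ∃ a b : ℝ, 0 ≤ a ∧ 0 ≤ b ∧
      ∀ φ : S, ‖A φ‖ ^ 2 ≤ a ^ 2 * ‖(φ : H)‖ ^ 2 + b ^ 2 * ‖sqrtG φ‖ ^ 2 := by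
  obtain ⟨M, hM⟩ := hfin
  have hM0 : (0 : ℝ) ≤ M := by
    have : (0 : ℝ) ∈ {r : ℝ | ∃ φ : S, ‖(φ : H)‖ ≤ 1 ∧ ‖sqrtG φ‖ ^ 2 ≤ E₀ ∧ r = ‖A φ‖} :=
      ⟨0, by simp [hE₀.le]⟩
    exact hM this
  -- key estimate for vectors of norm ≤ 1
  have key : ∀ φ : S, ‖(φ : H)‖ ≤ 1 →
      ‖A φ‖ ^ 2 ≤ M ^ 2 + (M ^ 2 / E₀) * ‖sqrtG φ‖ ^ 2 := by
    intro φ hφ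
    set E : ℝ := ‖sqrtG φ‖ ^ 2 with hE
    by_cases hle : E ≤ E₀
    · have h1 : ‖A φ‖ ≤ M := hM ⟨φ, hφ, hle, rfl⟩
      have h2 : ‖A φ‖ ^ 2 ≤ M ^ 2 := pow_le_pow_left₀ (norm_nonneg _) h1 2
      have h3 : 0 ≤ (M ^ 2 / E₀) * E :=
        mul_nonneg (div_nonneg (sq_nonneg _) hE₀.le) (sq_nonneg _)
      linarith
    · push_neg at hle
      have hEpos : 0 < E := lt_trans hE₀ hle
      set t : ℝ := Real.sqrt (E₀ / E) with ht
      have ht0 : 0 < t := Real.sqrt_pos.mpr (div_pos hE₀ hEpos)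
      have ht2 : t ^ 2 = E₀ / E := Real.sq_sqrt (div_pos hE₀ hEpos).le
      have ht1 : t ≤ 1 := by
        nlinarith [ht2, (div_le_one hEpos).mpr hle.le]
      set ψ : S := (t : ℂ) • φ with hψ
      have hnt : ‖(t : ℂ)‖ = t := by
        simp [Complex.norm_real, abs_of_pos ht0]
      have hψ1 : ‖(ψ : H)‖ ≤ 1 := by
        have : ‖(ψ : H)‖ = t * ‖(φ : H)‖ := by
          simp [hψ, norm_smul, hnt, ht0.le]
        rw [this]
        calc t * ‖(φ : H)‖ ≤ t * 1 := by
              exact mul_le_mul_of_nonneg_left hφ ht0.le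
          _ ≤ 1 := by linarith
      have hψ2 : ‖sqrtG ψ‖ ^ 2 ≤ E₀ := by
        have h1 : sqrtG ψ = (t : ℂ) • sqrtG φ := by simp [hψ]
        have : ‖sqrtG ψ‖ ^ 2 = t ^ 2 * E := by
          rw [h1, norm_smul, hnt, mul_pow, hE]
        rw [this, ht2]
        field_simp
        exact le_rfl
      have hAψ : ‖A ψ‖ ≤ M := hM ⟨ψ, hψ1, hψ2, rfl⟩
      have hAψ' : ‖A ψ‖ = t * ‖A φ‖ := by
        have h1 : A ψ = (t : ℂ) • A φ := by simp [hψ]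
        rw [h1, norm_smul, hnt]
      have hsq : t ^ 2 * ‖A φ‖ ^ 2 ≤ M ^ 2 := by
        have := pow_le_pow_left₀ (norm_nonneg (A ψ)) hAψ 2
        rw [hAψ', mul_pow] at this
        exact this
      have : ‖A φ‖ ^ 2 ≤ M ^ 2 * (E / E₀) := by
        rw [ht2] at hsq
        have hE₀' : E₀ ≠ 0 := hE₀.ne'
        have hE' : E ≠ 0 := hEpos.ne'
        rw [div_mul_eq_mul_div, div_le_iff₀ hEpos] at hsq
        rw [← mul_div_assoc, le_div_iff₀ hE₀]
        nlinarith
      have hnn : 0 ≤ M ^ 2 * (E / E₀) :=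
        mul_nonneg (sq_nonneg _) (div_nonneg hEpos.le hE₀.le)
      have heq : M ^ 2 * (E / E₀) = (M ^ 2 / E₀) * E := by ring
      nlinarith [sq_nonneg M]
  constructor
  · intro E hE
    refine ⟨Real.sqrt (M ^ 2 + (M ^ 2 / E₀) * E), ?_⟩
    rintro r ⟨φ, hφ1, hφ2, rfl⟩
    rw [Real.le_sqrt (norm_nonneg _)]
    have h1 := key φ hφ1
    have h2 : (M ^ 2 / E₀) * ‖sqrtG φ‖ ^ 2 ≤ (M ^ 2 / E₀) * E :=
      mul_le_mul_of_nonneg_left hφ2 (div_nonneg (sq_nonneg _) hE₀.le)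
    · linarith [mul_nonneg (div_nonneg (sq_nonneg M) hE₀.le) hE.le, sq_nonneg M]
    · positivity
  · refine ⟨M, M / Real.sqrt E₀, hM0, div_nonneg hM0 (Real.sqrt_nonneg _), ?_⟩
    have hb2 : (M / Real.sqrt E₀) ^ 2 = M ^ 2 / E₀ := by
      rw [div_pow, Real.sq_sqrt hE₀.le]
    intro φ
    rw [hb2]
    by_cases hz : (φ : H) = 0
    · have hφ0 : φ = 0 := by
        ext
        exact hz
      simp [hφ0, div_nonneg (sq_nonneg M) hE₀.le]
    · have hc : 0 < ‖(φ : H)‖ := norm_pos_iff.mpr hz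
      set c : ℝ := ‖(φ : H)‖ with hcdef
      set ψ : S := ((c⁻¹ : ℝ) : ℂ) • φ with hψ
      have hnc : ‖((c⁻¹ : ℝ) : ℂ)‖ = c⁻¹ := by
        simp [Complex.norm_real, abs_of_pos (inv_pos.mpr hc), hc.le]
      have hψ1 : ‖(ψ : H)‖ ≤ 1 := by
        have : ‖(ψ : H)‖ = c⁻¹ * c := by rw [hψ, Submodule.coe_smul, norm_smul, hnc]
        rw [this, inv_mul_cancel₀ hc.ne']
      have h1 := key ψ hψ1
      have h2 : ‖A ψ‖ = c⁻¹ * ‖A φ‖ := by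
        have : A ψ = ((c⁻¹ : ℝ) : ℂ) • A φ := by simp [hψ]
        rw [this, norm_smul, hnc]
      have h3 : ‖sqrtG ψ‖ = c⁻¹ * ‖sqrtG φ‖ := by
        have : sqrtG ψ = ((c⁻¹ : ℝ) : ℂ) • sqrtG φ := by simp [hψ]
        rw [this, norm_smul, hnc]
      rw [h2, h3] at h1
      have hc2 : 0 < c ^ 2 := pow_pos hc 2
      have := mul_le_mul_of_nonneg_left h1 hc2.le
      have hcc : c ^ 2 * ((c⁻¹ * ‖A φ‖) ^ 2) = ‖A φ‖ ^ 2 := by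
        field_simp
      have hcc2 : c ^ 2 * ((c⁻¹ * ‖sqrtG φ‖) ^ 2) = ‖sqrtG φ‖ ^ 2 := by
        field_simp
      calc ‖A φ‖ ^ 2 = c ^ 2 * ((c⁻¹ * ‖A φ‖) ^ 2) := hcc.symm
        _ ≤ c ^ 2 * (M ^ 2 + (M ^ 2 / E₀) * (c⁻¹ * ‖sqrtG φ‖) ^ 2) := this
        _ = M ^ 2 * c ^ 2 + (M ^ 2 / E₀) * (c ^ 2 * ((c⁻¹ * ‖sqrtG φ‖) ^ 2)) := by ring
        _ = M ^ 2 * c ^ 2 + (M ^ 2 / E₀) * ‖sqrtG φ‖ ^ 2 := by rw [hcc2]
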